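/- Let p be a prime, φ_p(x) = (x^p − x)/p, n ≥ 1, and let α be an algebraic number with φ_p^n(α) = 1. Then every Galois conjugate β of α over ℚ satisfies: |β|_v ≤ 1 for every non-archimedean place v of ℚ̄ (including those above p), and |β| ≤ (p+1)^{1/(p−1)} for every archimedean embedding. Consequently the absolute Weil height satisfies h(α) ≤ log(p+1)/(p−1). -/

import Mathlib

open Polynomial

/-- The least positive integer `c` such that `c·P` has integer coefficients (the lcm of the
denominators of the coefficients of `P ∈ ℚ[x]`). -/
def ratDen (P : Polynomial ℚ) : ℕ :=
  (Finset.range (P.natDegree + 1)).lcm fun i => (P.coeff i).den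

/-- The absolute logarithmic Weil height of an algebraic number `α ∈ ℂ`:
if `P = minpoly ℚ α` has degree `d`, denominator `c = ratDen P`, and complex roots
`β_1, …, β_d`, then `h(α) = (1/d)(log c + Σ_i log⁺|β_i|)`.  (By Gauss's lemma and the
product formula this agrees with the usual definition
`h(α) = (1/[ℚ(α):ℚ]) Σ_{v ∈ M_ℚ} Σ_{β ∈ O_α} log⁺|β|_v`.) -/
noncomputable def weilHeight (α : ℂ) : ℝ :=
  ((minpoly ℚ α).natDegree : ℝ)⁻¹ *
    (Real.log (ratDen (minpoly ℚ α)) +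
      (((minpoly ℚ α).aroots ℂ).map fun β => Real.log (max 1 ‖β‖)).sum)

/-- The map `φ_p(x) = (x^p − x)/p` on the complex numbers. -/
noncomputable def phiC (p : ℕ) : ℂ → ℂ := fun x => (x ^ p - x) / p

namespace Statement8

/-- The `k`-th iterate of `φ_p` as a polynomial over `ℚ`. -/
noncomputable def Pn (p : ℕ) : ℕ → Polynomial ℚ
  | 0 => X
  | k + 1 => C ((p : ℚ)⁻¹) * ((Pn p k) ^ p - Pn p k)

/-- Exponent of the clearing power of `p`. -/
def en (p : ℕ) : ℕ → ℕ
  | 0 => 0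
  | k + 1 => p * en p k + 1

/-- Monic integer version: `Zn p k = p^(en p k) • Pn p k` up to the obvious identification. -/
noncomputable def Zn (p : ℕ) : ℕ → Polynomial ℤ
  | 0 => X
  | k + 1 => (Zn p k) ^ p - C ((p : ℤ) ^ ((p - 1) * en p k)) * Zn p k

lemma aeval_Pn {K : Type*} [Field K] [CharZero K] (p : ℕ) (β : K) (k : ℕ) :
    aeval β (Pn p k) = (fun x : K => (x ^ p - x) / (p : K))^[k] β := by
  induction k with
  | zero => simp [Pn]
  | succ k ih =>
    rw [Function.iterate_succ_apply']
    simp only [Pn, map_mul, map_sub, map_pow, aeval_C, ih]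
    rw [div_eq_inv_mul]
    congr 1
    rw [map_inv₀, map_natCast]

lemma natDegree_Pn (p : ℕ) (hp2 : 2 ≤ p) (k : ℕ) : (Pn p k).natDegree = p ^ k := by
  induction k with
  | zero => simp [Pn]
  | succ k ih =>
    have hc : ((p : ℚ)⁻¹) ≠ 0 := inv_ne_zero (Nat.cast_ne_zero.mpr (by omega))
    have hlt : (Pn p k).natDegree < ((Pn p k) ^ p).natDegree := by
      rw [natDegree_pow, ih]
      have h1 : 0 < p ^ k := Nat.pow_pos (by omega)
      calc p ^ k = 1 * p ^ k := (one_mul _).symm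
        _ < p * p ^ k := by exact Nat.mul_lt_mul_of_lt_of_le (by omega) le_rfl h1
    rw [Pn, natDegree_C_mul hc, natDegree_sub_eq_left_of_natDegree_lt hlt,
      natDegree_pow, ih, pow_succ]
    ring

lemma monic_Zn (p : ℕ) (hp2 : 2 ≤ p) (k : ℕ) :
    (Zn p k).Monic ∧ (Zn p k).natDegree = p ^ k := by
  induction k with
  | zero => exact ⟨monic_X, natDegree_X⟩
  | succ k ih =>
    obtain ⟨hm, hdeg⟩ := ih
    have hmp : ((Zn p k) ^ p).Monic := hm.pow p
    have hdp : ((Zn p k) ^ p).natDegree = p ^ (k + 1) := by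
      rw [natDegree_pow, hdeg, pow_succ]; ring
    have hnlt : (C ((p : ℤ) ^ ((p - 1) * en p k)) * Zn p k).natDegree
        < ((Zn p k) ^ p).natDegree := by
      apply lt_of_le_of_lt (natDegree_C_mul_le _ _)
      rw [hdeg, hdp]
      exact Nat.pow_lt_pow_right (by omega) (by omega)
    refine ⟨hmp.sub_of_left (degree_lt_degree hnlt), ?_⟩
    rw [Zn, natDegree_sub_eq_left_of_natDegree_lt hnlt, hdp]


lemma aeval_Zn (p : ℕ) (hp1 : 1 ≤ p) (β : ℂ) (k : ℕ) :
    aeval β (Zn p k) = (p : ℂ) ^ (en p k) * (phiC p)^[k] β := by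
  obtain ⟨q, rfl⟩ : ∃ q, p = q + 1 := ⟨p - 1, by omega⟩
  induction k with
  | zero => simp [Zn, en]
  | succ k ih =>
    have hpC : (((q + 1) : ℕ) : ℂ) ≠ 0 := Nat.cast_ne_zero.mpr (by omega)
    rw [Function.iterate_succ_apply']
    simp only [Zn, map_sub, map_pow, map_mul, aeval_C, ih, en]
    have hq1 : (q + 1) - 1 = q := by omega
    rw [hq1]
    simp only [phiC]
    rw [← mul_div_assoc, eq_div_iff hpC]
    push_cast
    ring

lemma isIntegral_alpha (p n : ℕ) (hp : p.Prime) (α : ℂ)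
    (hα : (phiC p)^[n] α = 1) : IsIntegral ℤ α := by
  have hp2 : 2 ≤ p := hp.two_le
  obtain ⟨hm, hdeg⟩ := monic_Zn p hp2 n
  set W : Polynomial ℤ := Zn p n - C ((p : ℤ) ^ en p n) with hW
  have hWm : W.Monic := by
    apply hm.sub_of_left
    apply degree_lt_degree
    rw [natDegree_C, hdeg]
    exact Nat.pow_pos (by omega)
  refine ⟨W, hWm, ?_⟩
  have h0 : aeval α W = 0 := by
    rw [hW, map_sub, aeval_C, aeval_Zn p (by omega) α n, hα, mul_one]
    push_cast
    ring
  rwa [aeval_def] at h0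

lemma root_iterate {K : Type*} [Field K] [CharZero K] (p n : ℕ)
    (α : ℂ) (hα : (phiC p)^[n] α = 1)
    {β : K} (hβ : aeval β (minpoly ℚ α) = 0) :
    (fun x : K => (x ^ p - x) / (p : K))^[n] β = 1 := by
  have hroot : aeval α (Pn p n - 1) = 0 := by
    rw [map_sub, map_one, aeval_Pn]
    have he : (fun x : ℂ => (x ^ p - x) / (p : ℂ)) = phiC p := rfl
    rw [he, hα, sub_self]
  obtain ⟨g, hg⟩ := minpoly.dvd ℚ α hroot
  have h0 : aeval β (Pn p n - 1) = 0 := by rw [hg, map_mul, hβ, zero_mul]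
  rw [map_sub, map_one, aeval_Pn, sub_eq_zero] at h0
  exact h0

lemma nonarch_step {K : Type*} [NormedField K] [IsUltrametricDist K] (p : ℕ) (hp2 : 2 ≤ p)
    (hple : ‖(p : K)‖ ≤ 1) (hpne : (p : K) ≠ 0) {x : K} (hx : 1 < ‖x‖) :
    1 < ‖(x ^ p - x) / (p : K)‖ := by
  have h0 : 0 < ‖(p : K)‖ := norm_pos_iff.mpr hpne
  have hxp : ‖x‖ < ‖x‖ ^ p := by
    calc ‖x‖ = ‖x‖ ^ 1 := (pow_one _).symm
      _ < ‖x‖ ^ p := pow_lt_pow_right₀ hx (by omega)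
  have hmax : ‖x‖ ^ p ≤ max ‖x ^ p - x‖ ‖x‖ := by
    have h := IsUltrametricDist.norm_add_le_max (x ^ p - x) x
    rwa [sub_add_cancel, norm_pow] at h
  have hkey : ‖x‖ ^ p ≤ ‖x ^ p - x‖ := by
    rcases le_max_iff.mp hmax with h | h
    · exact h
    · linarith
  have h2 : ‖x ^ p - x‖ ≤ ‖x ^ p - x‖ / ‖(p : K)‖ := by
    rw [le_div_iff₀ h0]
    nlinarith [norm_nonneg (x ^ p - x)]
  rw [norm_div]
  linarith

lemma arch_step (p : ℕ) (hp2 : 2 ≤ p) {x : ℂ}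
    (hx : ((p : ℝ) + 1) ^ ((1 : ℝ) / ((p : ℝ) - 1)) < ‖x‖) :
    ((p : ℝ) + 1) ^ ((1 : ℝ) / ((p : ℝ) - 1)) < ‖phiC p x‖ := by
  set B : ℝ := ((p : ℝ) + 1) ^ ((1 : ℝ) / ((p : ℝ) - 1)) with hB
  have hp1 : (2 : ℝ) ≤ (p : ℝ) := by exact_mod_cast hp2
  have hpR : (0 : ℝ) < (p : ℝ) := by linarith
  have hBpow : B ^ (p - 1) = (p : ℝ) + 1 := by
    rw [hB, ← Real.rpow_natCast _ (p - 1), ← Real.rpow_mul (by linarith)]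
    rw [Nat.cast_sub (by omega), Nat.cast_one, one_div,
      inv_mul_cancel₀ (by linarith : (p : ℝ) - 1 ≠ 0), Real.rpow_one]
  have hB0 : 0 ≤ B := Real.rpow_nonneg (by linarith) _
  set a := ‖x‖ with ha
  have ha0 : 0 < a := lt_of_le_of_lt hB0 hx
  have hpow : (p : ℝ) + 1 < a ^ (p - 1) := by
    rw [← hBpow]
    exact pow_lt_pow_left₀ hx hB0 (by omega)
  have hap : a ^ p = a ^ (p - 1) * a := by rw [← pow_succ]; congr 1; omega
  have habs : a ^ p - a ≤ ‖x ^ p - x‖ := by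
    have h := norm_sub_norm_le (x ^ p) x
    rw [norm_pow] at h
    simpa [ha] using h
  have habsphi : ‖phiC p x‖ = ‖x ^ p - x‖ / (p : ℝ) := by
    simp [phiC, norm_div]
  rw [habsphi, lt_div_iff₀ hpR]
  have key : ((p : ℝ) + 1) * a < a ^ (p - 1) * a := mul_lt_mul_of_pos_right hpow ha0
  have hBa : B * (p : ℝ) < a * (p : ℝ) := mul_lt_mul_of_pos_right hx hpR
  nlinarith [habs, key, hap, hBa]

end Statement8

theorem conjugate_bounds_and_height_bound (p : ℕ) (hp : p.Prime) (n : ℕ) (hn : 1 ≤ n)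
    (α : ℂ) (halg : IsAlgebraic ℚ α) (hα : (phiC p)^[n] α = 1) :
    (∀ (ℓ : ℕ) [Fact ℓ.Prime]
      (K : Type) [NormedField K] [CharZero K] [IsUltrametricDist K] [Algebra ℚ_[ℓ] K],
      (∀ a : ℚ_[ℓ], ‖algebraMap ℚ_[ℓ] K a‖ = ‖a‖) →
      ∀ β : K, Polynomial.aeval β (minpoly ℚ α) = 0 → ‖β‖ ≤ 1) ∧
    (∀ β : ℂ, Polynomial.aeval β (minpoly ℚ α) = 0 →
      ‖β‖ ≤ ((p : ℝ) + 1) ^ ((1 : ℝ) / ((p : ℝ) - 1))) ∧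
    weilHeight α ≤ Real.log ((p : ℝ) + 1) / ((p : ℝ) - 1) := by
  have hp2 : 2 ≤ p := hp.two_le
  have hint : IsIntegral ℤ α := Statement8.isIntegral_alpha p n hp α hα
  -- archimedean bound
  have hB1 : (1 : ℝ) ≤ ((p : ℝ) + 1) ^ ((1 : ℝ) / ((p : ℝ) - 1)) := by
    have hp1 : (2 : ℝ) ≤ (p : ℝ) := by exact_mod_cast hp2
    exact Real.one_le_rpow (by linarith) (div_nonneg zero_le_one (by linarith))
  have harch : ∀ β : ℂ, Polynomial.aeval β (minpoly ℚ α) = 0 →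
      ‖β‖ ≤ ((p : ℝ) + 1) ^ ((1 : ℝ) / ((p : ℝ) - 1)) := by
    intro β hβ
    have hφn := Statement8.root_iterate p n α hα hβ
    by_contra hcon
    push_neg at hcon
    have hiter : ∀ k, ((p : ℝ) + 1) ^ ((1 : ℝ) / ((p : ℝ) - 1)) <
        ‖(fun x : ℂ => (x ^ p - x) / (p : ℂ))^[k] β‖ := by
      intro k
      induction k with
      | zero => simpa using hcon
      | succ k ih =>
        rw [Function.iterate_succ_apply']
        exact Statement8.arch_step p hp2 ih
    have h := hiter n
    rw [hφn] at h
    simp only [norm_one] at h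
    linarith
  refine ⟨?_, harch, ?_⟩
  · intro ℓ _ K _ _ _ _ hnorm β hβ
    have hφn := Statement8.root_iterate p n α hα hβ
    by_contra hcon
    push_neg at hcon
    have hpne : (p : K) ≠ 0 := Nat.cast_ne_zero.mpr hp.pos.ne'
    have hple : ‖(p : K)‖ ≤ 1 := by
      have h1 : algebraMap ℚ_[ℓ] K ((p : ℕ) : ℚ_[ℓ]) = ((p : ℕ) : K) := map_natCast _ p
      rw [← h1, hnorm]
      have h2 := Padic.norm_int_le_one (p := ℓ) ((p : ℕ) : ℤ)
      simpa using h2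
    have hiter : ∀ k, 1 < ‖(fun x : K => (x ^ p - x) / (p : K))^[k] β‖ := by
      intro k
      induction k with
      | zero => simpa using hcon
      | succ k ih =>
        rw [Function.iterate_succ_apply']
        exact Statement8.nonarch_step p hp2 hple hpne ih
    have h := hiter n
    rw [hφn, norm_one] at h
    exact lt_irrefl 1 h
  · -- height bound
    have hmp : minpoly ℚ α = (minpoly ℤ α).map (algebraMap ℤ ℚ) :=
      minpoly.isIntegrallyClosed_eq_field_fractions' ℚ hint
    have hden : ratDen (minpoly ℚ α) = 1 := by
      refine Nat.dvd_one.mp (Finset.lcm_dvd ?_)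
      intro i _
      rw [hmp, coeff_map]
      simp [eq_intCast, Rat.den_intCast]
    have hd : 0 < (minpoly ℚ α).natDegree := minpoly.natDegree_pos halg.isIntegral
    have hlogB : Real.log (((p : ℝ) + 1) ^ ((1 : ℝ) / ((p : ℝ) - 1))) =
        Real.log ((p : ℝ) + 1) / ((p : ℝ) - 1) := by
      rw [Real.log_rpow (by positivity), one_div, inv_mul_eq_div]
    have hroots : ∀ x ∈ (((minpoly ℚ α).aroots ℂ).map
        fun β => Real.log (max 1 ‖β‖)),
        x ≤ Real.log (((p : ℝ) + 1) ^ ((1 : ℝ) / ((p : ℝ) - 1))) := by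
      intro x hx
      obtain ⟨r, hr, rfl⟩ := Multiset.mem_map.mp hx
      have hr' : Polynomial.aeval r (minpoly ℚ α) = 0 := by
        rw [Polynomial.aeval_def, ← Polynomial.eval_map]
        exact Polynomial.isRoot_of_mem_roots hr
      have hle := harch r hr'
      have hpos : (0 : ℝ) < max 1 ‖r‖ := lt_of_lt_of_le one_pos (le_max_left _ _)
      exact Real.log_le_log hpos (max_le hB1 hle)
    have hcard : (Multiset.card ((minpoly ℚ α).aroots ℂ)) ≤ (minpoly ℚ α).natDegree := by
      calc Multiset.card ((minpoly ℚ α).aroots ℂ)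
          ≤ ((minpoly ℚ α).map (algebraMap ℚ ℂ)).natDegree := Polynomial.card_roots' _
        _ = (minpoly ℚ α).natDegree := Polynomial.natDegree_map _
    have hlogB0 : 0 ≤ Real.log (((p : ℝ) + 1) ^ ((1 : ℝ) / ((p : ℝ) - 1))) :=
      Real.log_nonneg hB1
    have hsum : (((minpoly ℚ α).aroots ℂ).map
        fun β => Real.log (max 1 ‖β‖)).sum ≤
        ((minpoly ℚ α).natDegree : ℝ) *
          Real.log (((p : ℝ) + 1) ^ ((1 : ℝ) / ((p : ℝ) - 1))) := by
      calc (((minpoly ℚ α).aroots ℂ).map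
          fun β => Real.log (max 1 ‖β‖)).sum
          ≤ (Multiset.card (((minpoly ℚ α).aroots ℂ).map
              fun β => Real.log (max 1 ‖β‖))) •
              Real.log (((p : ℝ) + 1) ^ ((1 : ℝ) / ((p : ℝ) - 1))) :=
            Multiset.sum_le_card_nsmul _ _ hroots
        _ = ((Multiset.card ((minpoly ℚ α).aroots ℂ)) : ℝ) *
              Real.log (((p : ℝ) + 1) ^ ((1 : ℝ) / ((p : ℝ) - 1))) := by
            rw [Multiset.card_map, nsmul_eq_mul]
        _ ≤ ((minpoly ℚ α).natDegree : ℝ) *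
              Real.log (((p : ℝ) + 1) ^ ((1 : ℝ) / ((p : ℝ) - 1))) := by
            apply mul_le_mul_of_nonneg_right _ hlogB0
            exact_mod_cast hcard
    rw [weilHeight, hden, ← hlogB]
    simp only [Nat.cast_one, Real.log_one, zero_add]
    have hdne : ((minpoly ℚ α).natDegree : ℝ) ≠ 0 := Nat.cast_ne_zero.mpr hd.ne'
    calc ((minpoly ℚ α).natDegree : ℝ)⁻¹ * (((minpoly ℚ α).aroots ℂ).map
          fun β => Real.log (max 1 ‖β‖)).sum
        ≤ ((minpoly ℚ α).natDegree : ℝ)⁻¹ * (((minpoly ℚ α).natDegree : ℝ) *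
            Real.log (((p : ℝ) + 1) ^ ((1 : ℝ) / ((p : ℝ) - 1)))) :=
          mul_le_mul_of_nonneg_left hsum (by positivity)
      _ = Real.log (((p : ℝ) + 1) ^ ((1 : ℝ) / ((p : ℝ) - 1))) := by
          rw [← mul_assoc, inv_mul_cancel₀ hdne, one_mul]
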